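/- arXiv:0904.0715 — 2 statements merged into one kernel-verified Lean document; each statement's English description precedes it below -/
import Mathlib

section
/- Consider the Ising model, i.e. I_x = I for all x ∈ ℤ with a fixed real I, let β > 0 and χ = e^{−2β I}. Writing X^r_n for the crystal partition function on an interval of n sites with minus boundary conditions (it depends only on the length n and on r, by translation invariance), one has for all n ≥ 3 and 1 ≤ r ≤ n: X^r_n = X^{r−1}_{n−1} + X^r_{n−1} + (χ − 1)·X^{r−1}_{n−2}, with the convention X^s_{n'} = 0 whenever s < 0 or s > n'. -/
open Finset

/-- Spin configurations on `{1, …, n}`, encoded as boolean functions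
(`true` ↔ spin `+1`, `false` ↔ spin `-1`). -/
abbrev Config (n : ℕ) := {x // x ∈ Finset.Icc 1 n} → Bool

/-- The spin value `±1` of the configuration `σ` at the site `x` (value `1` off the box). -/
noncomputable def spin {n : ℕ} (σ : Config n) (x : ℕ) : ℝ :=
  if h : x ∈ Finset.Icc 1 n then (if σ ⟨x, h⟩ then 1 else -1) else 1

/-- The number `N_+(σ)` of sites where `σ` takes the value `+1`. -/
def Nplus {n : ℕ} (σ : Config n) : ℕ :=
  (Finset.univ.filter fun x => σ x = true).card

/-- The Ising Hamiltonian `H^-` on `{1, …, n}` with minus boundary spin on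
both sides. -/
noncomputable def Hminus (I : ℝ) (n : ℕ) (σ : Config n) : ℝ :=
  I * ((∑ x ∈ Finset.Icc 2 n, (if spin σ (x - 1) ≠ spin σ x then 1 else 0))
        + (if spin σ 1 ≠ -1 then 1 else 0)
        + (if spin σ n ≠ -1 then 1 else 0))

/-- The crystal partition function `X^r_n` of the Ising model (minus boundary
on both sides), defined for every integer `r`; it vanishes automatically when
`r < 0` or `r > n`. -/
noncomputable def X (β I : ℝ) (n : ℕ) (r : ℤ) : ℝ :=
  ∑ σ ∈ Finset.univ.filter (fun σ : Config n => (Nplus σ : ℤ) = r),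
    Real.exp (-β * Hminus I n σ)

/-! ### Auxiliary material -/

section Aux

lemma aux_mem_top {m : ℕ} : m + 1 ∈ Finset.Icc 1 (m + 1) := by
  simp

lemma aux_sub_mem {m x : ℕ} (hx : x ∈ Finset.Icc 1 m) : x ∈ Finset.Icc 1 (m + 1) := by
  simp only [Finset.mem_Icc] at *; omega

/-- Extend a configuration on `{1,…,m}` by the value `b` at `m+1`. -/
def extC (m : ℕ) (σ : Config m) (b : Bool) : Config (m + 1) :=
  fun x => if h : (x : ℕ) ∈ Finset.Icc 1 m then σ ⟨x, h⟩ else b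

/-- Restrict a configuration on `{1,…,m+1}` to `{1,…,m}`. -/
def res (m : ℕ) (τ : Config (m + 1)) : Config m :=
  fun x => τ ⟨x.1, aux_sub_mem x.2⟩

lemma spin_cases {m : ℕ} (σ : Config m) (x : ℕ) : spin σ x = 1 ∨ spin σ x = -1 := by
  unfold spin
  split
  · split
    · left; rfl
    · right; rfl
  · left; rfl

lemma spin_ext_of_le {m : ℕ} (σ : Config m) (b : Bool) {x : ℕ} (hx : x ≤ m) :
    spin (extC m σ b) x = spin σ x := by
  unfold spin extC
  by_cases h1 : x ∈ Finset.Icc 1 m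
  · have h2 : x ∈ Finset.Icc 1 (m + 1) := aux_sub_mem h1
    rw [dif_pos h2, dif_pos h1, dif_pos h1]
  · have h2 : x ∉ Finset.Icc 1 (m + 1) := by
      simp only [Finset.mem_Icc] at *; omega
    rw [dif_neg h2, dif_neg h1]

lemma spin_ext_top {m : ℕ} (σ : Config m) (b : Bool) :
    spin (extC m σ b) (m + 1) = if b then 1 else -1 := by
  unfold spin extC
  rw [dif_pos aux_mem_top]
  have h1 : (m + 1 : ℕ) ∉ Finset.Icc 1 m := by simp
  rw [dif_neg h1]

lemma res_ext {m : ℕ} (σ : Config m) (b : Bool) : res m (extC m σ b) = σ := by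
  funext x
  unfold res extC
  rw [dif_pos x.2]

lemma ext_res {m : ℕ} (τ : Config (m + 1)) (hb : τ ⟨m + 1, aux_mem_top⟩ = b) :
    extC m (res m τ) b = τ := by
  funext x
  unfold extC res
  by_cases h : (x : ℕ) ∈ Finset.Icc 1 m
  · rw [dif_pos h]
  · rw [dif_neg h]
    have hx := x.2
    simp only [Finset.mem_Icc] at h hx
    have : (x : ℕ) = m + 1 := by omega
    have hxeq : x = ⟨m + 1, aux_mem_top⟩ := Subtype.ext this
    rw [hxeq]
    exact hb.symm

lemma spin_eq_one_iff {m : ℕ} (σ : Config m) {x : ℕ} (hx : x ∈ Finset.Icc 1 m) :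
    spin σ x = 1 ↔ σ ⟨x, hx⟩ = true := by
  unfold spin
  rw [dif_pos hx]
  cases h : σ ⟨x, hx⟩ <;> simp [h] <;> norm_num

lemma Nplus_eq {n : ℕ} (σ : Config n) :
    Nplus σ = ((Finset.Icc 1 n).filter fun x => spin σ x = 1).card := by
  classical
  calc Nplus σ = ∑ x ∈ (Finset.Icc 1 n).attach, (if σ x = true then (1:ℕ) else 0) := by
        rw [Nplus, Finset.univ_eq_attach, Finset.card_filter]
    _ = ∑ x ∈ (Finset.Icc 1 n).attach, (if spin σ x.1 = 1 then (1:ℕ) else 0) := by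
        refine Finset.sum_congr rfl fun x _ => ?_
        by_cases h : σ x = true
        · rw [if_pos h, if_pos ((spin_eq_one_iff σ x.2).2 h)]
        · rw [if_neg h, if_neg (fun hh => h ((spin_eq_one_iff σ x.2).1 hh))]
    _ = ∑ x ∈ Finset.Icc 1 n, (if spin σ x = 1 then (1:ℕ) else 0) :=
        Finset.sum_attach (Finset.Icc 1 n) (fun y => if spin σ y = 1 then (1:ℕ) else 0)
    _ = ((Finset.Icc 1 n).filter fun x => spin σ x = 1).card :=
        (Finset.card_filter _ _).symm

lemma Nplus_ext {m : ℕ} (σ : Config m) (b : Bool) :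
    Nplus (extC m σ b) = Nplus σ + (if b then 1 else 0) := by
  classical
  rw [Nplus_eq, Nplus_eq]
  have hIcc : Finset.Icc 1 (m + 1) = insert (m + 1) (Finset.Icc 1 m) := by
    exact (Finset.insert_Icc_right_eq_Icc_add_one (by omega)).symm
  rw [hIcc, Finset.filter_insert]
  have hf : (Finset.Icc 1 m).filter (fun x => spin (extC m σ b) x = 1)
      = (Finset.Icc 1 m).filter (fun x => spin σ x = 1) := by
    apply Finset.filter_congr
    intro x hx
    simp only [Finset.mem_Icc] at hx
    rw [spin_ext_of_le σ b hx.2]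
  by_cases hb : b
  · rw [if_pos (by rw [spin_ext_top, if_pos hb]), Finset.card_insert_of_notMem (by simp), hf,
      if_pos hb]
  · rw [if_neg (by rw [spin_ext_top, if_neg hb]; norm_num), hf, if_neg hb, Nat.add_zero]

lemma Hminus_ext (I : ℝ) {m : ℕ} (hm : 1 ≤ m) (σ : Config m) (b : Bool) :
    Hminus I (m + 1) (extC m σ b) =
      Hminus I m σ + (if b then (if spin σ m = 1 then 0 else 2 * I) else 0) := by
  unfold Hminus
  rw [Finset.sum_Icc_succ_top (by omega : 2 ≤ m + 1)]
  have hsum : (∑ x ∈ Finset.Icc 2 m,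
      (if spin (extC m σ b) (x - 1) ≠ spin (extC m σ b) x then (1:ℝ) else 0))
      = ∑ x ∈ Finset.Icc 2 m, (if spin σ (x - 1) ≠ spin σ x then (1:ℝ) else 0) := by
    apply Finset.sum_congr rfl
    intro x hx
    simp only [Finset.mem_Icc] at hx
    rw [spin_ext_of_le σ b (by omega), spin_ext_of_le σ b (by omega)]
  have hmm : m + 1 - 1 = m := by omega
  rw [hsum, hmm, spin_ext_of_le σ b (le_refl m), spin_ext_top]
  rw [spin_ext_of_le σ b hm]
  rcases spin_cases σ m with hs | hs <;> rw [hs] <;> cases b <;> norm_num <;>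
    ((try ring_nf) <;> tauto)

lemma weight_ext (β I : ℝ) {m : ℕ} (hm : 1 ≤ m) (σ : Config m) (b : Bool) :
    Real.exp (-β * Hminus I (m + 1) (extC m σ b)) =
      Real.exp (-β * Hminus I m σ) *
        (if b then (if spin σ m = 1 then 1 else Real.exp (-2 * β * I)) else 1) := by
  rw [Hminus_ext I hm σ b]
  cases b
  · norm_num
  · rcases spin_cases σ m with hs | hs <;> rw [hs] <;> norm_num
    rw [← Real.exp_add]
    ring_nf

/-- The master bijection lemma: summing over configurations on `{1,…,m+1}` whose
top spin is prescribed. -/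
lemma sum_ext (β I : ℝ) {m : ℕ} (hm : 1 ≤ m) (r : ℤ) (b : Bool) :
    (∑ τ ∈ Finset.univ.filter (fun τ : Config (m + 1) =>
        (Nplus τ : ℤ) = r ∧ spin τ (m + 1) = (if b then 1 else -1)),
      Real.exp (-β * Hminus I (m + 1) τ))
    = ∑ σ ∈ Finset.univ.filter
        (fun σ : Config m => (Nplus σ : ℤ) = r - (if b then 1 else 0)),
      Real.exp (-β * Hminus I m σ) *
        (if b then (if spin σ m = 1 then 1 else Real.exp (-2 * β * I)) else 1) := by
  classical
  have spin_top_iff : ∀ τ : Config (m + 1),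
      (spin τ (m + 1) = (if b then 1 else -1)) ↔ τ ⟨m + 1, aux_mem_top⟩ = b := by
    intro τ
    unfold spin
    rw [dif_pos aux_mem_top]
    cases h : τ ⟨m + 1, aux_mem_top⟩ <;> cases b <;> simp <;> norm_num
  refine Finset.sum_nbij' (res m) (fun σ => extC m σ b) ?_ ?_ ?_ ?_ ?_
  · intro τ hτ
    simp only [Finset.mem_filter, Finset.mem_univ, true_and] at hτ ⊢
    obtain ⟨hN, hsp⟩ := hτ
    have hτe : extC m (res m τ) b = τ := ext_res τ ((spin_top_iff τ).1 hsp)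
    have := Nplus_ext (res m τ) b
    rw [hτe] at this
    rw [this] at hN
    push_cast at hN
    cases b <;> simp at hN ⊢ <;> omega
  · intro σ hσ
    simp only [Finset.mem_filter, Finset.mem_univ, true_and] at hσ ⊢
    constructor
    · rw [Nplus_ext]
      push_cast
      cases b <;> simp at hσ ⊢ <;> omega
    · rw [spin_ext_top]
  · intro τ hτ
    simp only [Finset.mem_filter, Finset.mem_univ, true_and] at hτ
    exact ext_res τ ((spin_top_iff τ).1 hτ.2)
  · intro σ _
    exact res_ext σ b
  · intro τ hτ
    simp only [Finset.mem_filter, Finset.mem_univ, true_and] at hτ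
    have hτe : extC m (res m τ) b = τ := ext_res τ ((spin_top_iff τ).1 hτ.2)
    conv_lhs => rw [← hτe]
    rw [weight_ext β I hm (res m τ) b]

/-- The part of `X` with last spin `-1`. -/
noncomputable def Fpart (β I : ℝ) (m : ℕ) (r : ℤ) : ℝ :=
  ∑ σ ∈ Finset.univ.filter
      (fun σ : Config m => (Nplus σ : ℤ) = r ∧ spin σ m = -1),
    Real.exp (-β * Hminus I m σ)

/-- The part of `X` with last spin `+1`. -/
noncomputable def Gpart (β I : ℝ) (m : ℕ) (r : ℤ) : ℝ :=
  ∑ σ ∈ Finset.univ.filter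
      (fun σ : Config m => (Nplus σ : ℤ) = r ∧ spin σ m = 1),
    Real.exp (-β * Hminus I m σ)

lemma X_eq_parts (β I : ℝ) (m : ℕ) (r : ℤ) :
    X β I m r = Fpart β I m r + Gpart β I m r := by
  classical
  unfold X Fpart Gpart
  rw [← Finset.sum_filter_add_sum_filter_not
      (Finset.univ.filter (fun σ : Config m => (Nplus σ : ℤ) = r))
      (fun σ => spin σ m = -1), Finset.filter_filter, Finset.filter_filter]
  congr 2
  apply Finset.filter_congr
  intro σ _
  rcases spin_cases σ m with hs | hs <;> simp [hs] <;> norm_num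

lemma Fpart_succ (β I : ℝ) {m : ℕ} (hm : 1 ≤ m) (r : ℤ) :
    Fpart β I (m + 1) r = X β I m r := by
  classical
  have h := sum_ext β I hm r false
  simp only [if_false, Bool.false_eq_true] at h
  unfold Fpart X
  rw [h]
  simp [mul_one]

lemma Gpart_succ (β I : ℝ) {m : ℕ} (hm : 1 ≤ m) (r : ℤ) :
    Gpart β I (m + 1) r =
      Gpart β I m (r - 1) + Real.exp (-2 * β * I) * Fpart β I m (r - 1) := by
  classical
  have h := sum_ext β I hm r true
  simp only [if_true] at h
  unfold Gpart Fpart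
  rw [h]
  rw [← Finset.sum_filter_add_sum_filter_not
      (Finset.univ.filter (fun σ : Config m => (Nplus σ : ℤ) = r - 1))
      (fun σ => spin σ m = 1), Finset.filter_filter, Finset.filter_filter]
  rw [Finset.mul_sum]
  congr 1
  · apply Finset.sum_congr rfl
    intro σ hσ
    simp only [Finset.mem_filter] at hσ
    rw [if_pos hσ.2.2, mul_one]
  · rw [show (Finset.univ.filter fun σ : Config m => (Nplus σ : ℤ) = r - 1 ∧ ¬spin σ m = 1)
        = Finset.univ.filter fun σ : Config m => (Nplus σ : ℤ) = r - 1 ∧ spin σ m = -1 from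
      Finset.filter_congr fun σ _ => by
        rcases spin_cases σ m with hs | hs <;> simp [hs] <;> norm_num]
    apply Finset.sum_congr rfl
    intro σ hσ
    simp only [Finset.mem_filter] at hσ
    rw [if_neg (by rw [hσ.2.2]; norm_num)]
    ring

end Aux

/-- The recursive equation (19) for the crystal partition functions `X^r_n`
of the Ising model, with `χ = e^{-2βI}` (here `X^s_{n'} = 0` automatically
whenever `s < 0` or `s > n'`). -/
theorem stmt_9 (β I : ℝ) (hβ : 0 < β) (n : ℕ) (hn : 3 ≤ n)
    (r : ℤ) (hr0 : 1 ≤ r) (hr1 : r ≤ (n : ℤ)) :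
    X β I n r = X β I (n - 1) (r - 1) + X β I (n - 1) r
        + (Real.exp (-2 * β * I) - 1) * X β I (n - 2) (r - 1) := by
  obtain ⟨m, rfl⟩ : ∃ m, n = m + 2 := ⟨n - 2, by omega⟩
  have hm : 1 ≤ m := by omega
  have h1 : m + 2 - 1 = m + 1 := by omega
  have h2 : m + 2 - 2 = m := by omega
  rw [h1, h2]
  have e0 : X β I (m + 2) r = Fpart β I (m + 2) r + Gpart β I (m + 2) r :=
    X_eq_parts β I (m + 2) r
  have e1 : Fpart β I (m + 2) r = X β I (m + 1) r := Fpart_succ β I (by omega) r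
  have e2 : Gpart β I (m + 2) r =
      Gpart β I (m + 1) (r - 1) + Real.exp (-2 * β * I) * Fpart β I (m + 1) (r - 1) :=
    Gpart_succ β I (by omega) r
  have e3 : X β I (m + 1) (r - 1) = Fpart β I (m + 1) (r - 1) + Gpart β I (m + 1) (r - 1) :=
    X_eq_parts β I (m + 1) (r - 1)
  have e4 : Fpart β I (m + 1) (r - 1) = X β I m (r - 1) := Fpart_succ β I hm (r - 1)
  rw [e0, e1, e2, e4]
  have : Gpart β I (m + 1) (r - 1) = X β I (m + 1) (r - 1) - X β I m (r - 1) := by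
    rw [e3, e4]; ring
  rw [this]
  ring
end

section
/- Consider the Ising model, i.e. I_x = I for all x ∈ ℤ with a fixed real I, let β > 0 and χ = e^{−2β I}. Then for all integers n ≥ 1 and 1 ≤ r ≤ n, the crystal partition function with minus boundary conditions has the closed form X^r_n = Σ_{k=1}^{r} C(n−r+1, k)·C(r−1, k−1)·χ^k, where C(a,b) is the binomial coefficient (equal to 0 when b > a). -/
open Finset

/-- number of `true`s -/
def onesF {n : ℕ} (τ : Fin n → Bool) : ℕ := ∑ i, if τ i then 1 else 0

/-- ascent count given previous spin `p`. -/
def kf : {n : ℕ} → Bool → (Fin n → Bool) → ℕ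
  | 0, _, _ => 0
  | _+1, p, τ => (if τ 0 = true ∧ p = false then 1 else 0) + kf (τ 0) (Fin.tail τ)

lemma kf_cons {n : ℕ} (p b : Bool) (τ : Fin n → Bool) :
    kf p (Fin.cons b τ) = (if b = true ∧ p = false then 1 else 0) + kf b τ := by
  simp [kf, Fin.tail_cons]

lemma onesF_cons {n : ℕ} (b : Bool) (τ : Fin n → Bool) :
    onesF (Fin.cons b τ) = (if b then 1 else 0) + onesF τ := by
  rw [onesF, Fin.sum_univ_succ]
  simp [onesF]

lemma onesF_le {n : ℕ} (τ : Fin n → Bool) : onesF τ ≤ n := by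
  calc onesF τ ≤ ∑ _i : Fin n, 1 := Finset.sum_le_sum (fun i _ => by split <;> omega)
  _ = n := by simp

/-- the weighted sum -/
noncomputable def S (c : ℝ) (n : ℕ) (p : Bool) (r : ℤ) : ℝ :=
  ∑ τ ∈ Finset.univ.filter (fun τ : Fin n → Bool => (onesF τ : ℤ) = r), c ^ kf p τ

lemma S_of_lt (c : ℝ) (n : ℕ) (p : Bool) (r : ℤ) (h : r < 0 ∨ (n : ℤ) < r) :
    S c n p r = 0 := by
  rw [S, Finset.sum_eq_zero]
  intro τ hτ
  simp only [Finset.mem_filter] at hτ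
  have := onesF_le τ
  omega

lemma S_zero (c : ℝ) (n : ℕ) (p : Bool) : S c n p 0 = 1 := by
  rw [S]
  have : Finset.univ.filter (fun τ : Fin n → Bool => (onesF τ : ℤ) = 0)
      = {fun _ => false} := by
    ext τ
    simp only [Finset.mem_filter, Finset.mem_univ, true_and, Finset.mem_singleton]
    constructor
    · intro h
      have h0 : onesF τ = 0 := by exact_mod_cast h
      rw [onesF, Finset.sum_eq_zero_iff] at h0
      funext i
      have := h0 i (Finset.mem_univ i)
      by_contra hb
      simp [Bool.not_eq_false] at hb
      simp [hb] at this
    · rintro rfl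
      simp [onesF]
  rw [this, Finset.sum_singleton]
  have : ∀ (m : ℕ) (q : Bool), kf (n := m) q (fun _ => false) = 0 := by
    intro m
    induction m with
    | zero => intro q; simp [kf]
    | succ m ih =>
        intro q
        rw [kf]
        rw [show (Fin.tail fun _ => false : Fin m → Bool) = fun _ => false from rfl, ih false]
        simp
  rw [this]
  simp

lemma S_succ (c : ℝ) (n : ℕ) (p : Bool) (r : ℤ) :
    S c (n+1) p r = (if p then 1 else c) * S c n true (r-1) + S c n false r := by
  rw [S, Finset.sum_filter]
  rw [← Equiv.sum_comp (Fin.consEquiv (fun _ : Fin (n+1) => Bool))]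
  rw [Fintype.sum_prod_type]
  rw [Fintype.sum_bool]
  have hc : ∀ (b : Bool) (τ : Fin n → Bool),
      (Fin.consEquiv (fun _ : Fin (n+1) => Bool)) (b, τ) = Fin.cons b τ := fun _ _ => rfl
  simp only [hc, onesF_cons, kf_cons]
  norm_num
  rw [S, Finset.sum_filter, S, Finset.sum_filter]
  congr 1
  cases p with
  | true =>
      norm_num
      apply Finset.sum_congr rfl
      intro τ _
      exact if_congr (by omega) rfl rfl
  | false =>
      norm_num
      rw [Finset.mul_sum]
      apply Finset.sum_congr rfl
      intro τ _
      by_cases h : (onesF τ : ℤ) = r - 1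
      · rw [if_pos (by omega), if_pos h, pow_add]
        ring
      · rw [if_neg (by omega), if_neg h, mul_zero]

noncomputable def Tf (c : ℝ) (n r : ℕ) : ℝ :=
  ∑ m ∈ Finset.range (r+1), ((n-r).choose m : ℝ) * (r.choose m : ℝ) * c ^ m

noncomputable def Ff (c : ℝ) (n r : ℕ) : ℝ :=
  ∑ k ∈ Finset.Icc 1 r, ((n - r + 1).choose k : ℝ) * ((r - 1).choose (k - 1) : ℝ) * c ^ k

lemma Tf_self (c : ℝ) (m : ℕ) : Tf c m m = 1 := by
  rw [Tf, Finset.sum_eq_single 0]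
  · simp
  · intro b _ hb
    obtain ⟨t, rfl⟩ := Nat.exists_eq_succ_of_ne_zero hb
    simp [Nat.sub_self, Nat.choose_eq_zero_of_lt (Nat.succ_pos t)]
  · intro h; simp at h

lemma Ff_self (c : ℝ) (n : ℕ) : Ff c (n+1) (n+1) = c := by
  rw [Ff, Finset.sum_eq_single 1]
  · simp
  · intro b hb hb1
    simp only [Finset.mem_Icc] at hb
    have h2 : 2 ≤ b := by omega
    have : (n + 1 - (n + 1) + 1).choose b = 0 := by
      rw [Nat.sub_self]
      exact Nat.choose_eq_zero_of_lt (by omega)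
    simp [this]
    exact Or.inl (Or.inl (Nat.choose_eq_zero_of_lt (by omega)))
  · intro h; simp at h

lemma sum_Icc_one {M : Type*} [AddCommMonoid M] (g : ℕ → M) (r : ℕ) :
    ∑ k ∈ Finset.Icc 1 r, g k = ∑ m ∈ Finset.range r, g (m+1) := by
  induction r with
  | zero => simp
  | succ r ih =>
      rw [Finset.sum_Icc_succ_top (by omega), ih, Finset.sum_range_succ]

lemma L_T1 (c : ℝ) (n s : ℕ) (h : s + 1 ≤ n) :
    Tf c (n+1) (s+1) = Tf c n s + Ff c n (s+1) := by
  have h1 : n + 1 - (s+1) = n - s := by omega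
  have h2 : n - (s+1) + 1 = n - s := by omega
  have hT : Tf c n s = ∑ m ∈ Finset.range (s+2), ((n-s).choose m : ℝ) * (s.choose m : ℝ) * c ^ m := by
    rw [Tf, Finset.sum_range_succ _ (s+1), Nat.choose_succ_self]
    norm_num
  have hF : Ff c n (s+1)
      = ∑ m ∈ Finset.range (s+1), ((n-s).choose (m+1) : ℝ) * (s.choose m : ℝ) * c ^ (m+1) := by
    rw [Ff, sum_Icc_one, h2]
    simp
  rw [hT, hF, Tf, h1]
  rw [Finset.sum_range_succ' _ (s+1)]
  conv_rhs => rw [Finset.sum_range_succ' _ (s+1)]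
  have hpt : ∀ k ∈ Finset.range (s+1),
      ((n-s).choose (k+1) : ℝ) * (((s+1)).choose (k+1) : ℝ) * c ^ (k+1)
      = ((n-s).choose (k+1) : ℝ) * (s.choose (k+1) : ℝ) * c ^ (k+1)
        + ((n-s).choose (k+1) : ℝ) * (s.choose k : ℝ) * c ^ (k+1) := by
    intro k _
    rw [Nat.choose_succ_succ s k]
    push_cast; ring
  rw [Finset.sum_congr rfl hpt, Finset.sum_add_distrib]
  simp
  ring

lemma L_F1 (c : ℝ) (n s : ℕ) (h : s + 1 ≤ n) :
    Ff c (n+1) (s+1) = c * Tf c n s + Ff c n (s+1) := by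
  rw [Ff, Ff, Tf, sum_Icc_one, sum_Icc_one, Finset.mul_sum]
  rw [← Finset.sum_add_distrib]
  apply Finset.sum_congr rfl
  intro m _
  have h1 : n + 1 - (s+1) + 1 = (n - s) + 1 := by omega
  have h2 : n - (s+1) + 1 = n - s := by omega
  rw [h1, h2]
  simp only [Nat.add_sub_cancel]
  rw [Nat.choose_succ_succ (n - s) m]
  push_cast
  ring

lemma Tf_zero (c : ℝ) (m : ℕ) : Tf c m 0 = 1 := by simp [Tf]

lemma S_closed (c : ℝ) (n : ℕ) :
    (∀ r : ℕ, r ≤ n → S c n true r = Tf c n r) ∧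
    (∀ r : ℕ, 1 ≤ r → r ≤ n → S c n false r = Ff c n r) := by
  induction n with
  | zero =>
      refine ⟨?_, ?_⟩
      · intro r hr
        interval_cases r
        rw [Nat.cast_zero, S_zero, Tf_self]
      · intro r h1 h2; omega
  | succ n ih =>
      obtain ⟨ihT, ihF⟩ := ih
      refine ⟨?_, ?_⟩
      · intro r hr
        rw [S_succ]
        simp only [if_true]
        rcases Nat.eq_zero_or_pos r with rfl | hr1
        · rw [show ((0:ℕ):ℤ) - 1 = -1 by norm_num, S_of_lt c n true (-1) (Or.inl (by norm_num)),
            Nat.cast_zero, S_zero, Tf_zero]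
          norm_num
        · obtain ⟨s, rfl⟩ := Nat.exists_eq_add_of_le hr1
          rw [show ((1 + s : ℕ):ℤ) - 1 = ((s:ℕ):ℤ) by push_cast; ring]
          rw [ihT s (by omega)]
          rcases Nat.lt_or_ge (1 + s) (n + 1) with hlt | hge
          · rw [ihF (1+s) (by omega) (by omega)]
            rw [show 1 + s = s + 1 by ring] at *
            rw [L_T1 c n s (by omega)]
            ring
          · have hs : s = n := by omega
            subst hs
            rw [S_of_lt c s false _ (Or.inr (by push_cast; omega))]
            rw [show 1 + s = s + 1 by ring, Tf_self, Tf_self]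
            ring
      · intro r hr1 hr2
        rw [S_succ]
        simp only [Bool.false_eq_true, if_false]
        obtain ⟨s, rfl⟩ := Nat.exists_eq_add_of_le hr1
        rw [show ((1 + s : ℕ):ℤ) - 1 = ((s:ℕ):ℤ) by push_cast; ring]
        rw [ihT s (by omega)]
        rcases Nat.lt_or_ge (1 + s) (n + 1) with hlt | hge
        · rw [ihF (1+s) (by omega) (by omega)]
          rw [show 1 + s = s + 1 by ring] at *
          rw [L_F1 c n s (by omega)]
        · have hs : s = n := by omega
          subst hs
          rw [S_of_lt c s false _ (Or.inr (by push_cast; omega))]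
          rw [show 1 + s = s + 1 by ring, Tf_self, Ff_self]
          ring

def siteEquiv (n : ℕ) : Fin n ≃ {x // x ∈ Finset.Icc 1 n} where
  toFun i := ⟨i.1 + 1, by simp only [Finset.mem_Icc]; omega⟩
  invFun x := ⟨x.1 - 1, by have := x.2; simp only [Finset.mem_Icc] at this; omega⟩
  left_inv i := by ext; simp
  right_inv x := by
    have := x.2; simp only [Finset.mem_Icc] at this
    ext; simp; omega

def configEquiv (n : ℕ) : (Fin n → Bool) ≃ Config n :=
  Equiv.arrowCongr (siteEquiv n) (Equiv.refl _)

def bsp {n : ℕ} (τ : Fin n → Bool) (x : ℕ) : Bool :=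
  if h : 1 ≤ x ∧ x ≤ n then τ ⟨x - 1, by omega⟩ else false

lemma bsp_zero {n : ℕ} (τ : Fin n → Bool) : bsp τ 0 = false := by simp [bsp]

lemma bsp_gt {n : ℕ} (τ : Fin n → Bool) (x : ℕ) (h : n < x) : bsp τ x = false := by
  rw [bsp, dif_neg]; omega

lemma spin_eq {n : ℕ} (τ : Fin n → Bool) (x : ℕ) (h1 : 1 ≤ x) (h2 : x ≤ n) :
    spin (configEquiv n τ) x = (if bsp τ x then 1 else -1) := by
  have hx : x ∈ Finset.Icc 1 n := by simp only [Finset.mem_Icc]; omega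
  rw [spin, dif_pos hx, bsp, dif_pos ⟨h1, h2⟩]
  rfl

def bspP {n : ℕ} (p : Bool) (τ : Fin n → Bool) (x : ℕ) : Bool :=
  if x = 0 then p else bsp τ x

lemma bsp_tail {n : ℕ} (τ : Fin (n+1) → Bool) (y : ℕ) (h1 : 1 ≤ y) (h2 : y ≤ n) :
    bsp (Fin.tail τ) y = bsp τ (y + 1) := by
  rw [bsp, dif_pos ⟨h1, h2⟩, bsp, dif_pos ⟨by omega, by omega⟩]
  show τ (Fin.succ _) = _
  congr 1
  ext
  simp
  omega

lemma bsp_one {n : ℕ} (τ : Fin (n+1) → Bool) : bsp τ 1 = τ 0 := by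
  rw [bsp, dif_pos ⟨le_refl 1, by omega⟩]
  congr 1

lemma bspP_tail {n : ℕ} (p : Bool) (τ : Fin (n+1) → Bool) (y : ℕ) (h2 : y ≤ n) :
    bspP (τ 0) (Fin.tail τ) y = bspP p τ (y + 1) := by
  rcases Nat.eq_zero_or_pos y with rfl | hy
  · simp [bspP, bsp_one]
  · rw [bspP, if_neg (by omega), bspP, if_neg (by omega)]
    exact bsp_tail τ y hy h2

lemma sum_Icc_shift {M : Type*} [AddCommMonoid M] (f : ℕ → M) (a r : ℕ) :
    ∑ x ∈ Finset.Icc (a+1) (r+1), f x = ∑ y ∈ Finset.Icc a r, f (y+1) := by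
  rw [← Finset.map_add_right_Icc a r 1, Finset.sum_map]
  rfl

lemma kf_eq_sum : ∀ (n : ℕ) (p : Bool) (τ : Fin n → Bool),
    kf p τ = ∑ x ∈ Finset.Icc 1 n,
      (if bsp τ x = true ∧ bspP p τ (x - 1) = false then 1 else 0) := by
  intro n
  induction n with
  | zero => intro p τ; simp [kf]
  | succ n ih =>
      intro p τ
      rw [kf]
      have hsplit : Finset.Icc 1 (n+1) = insert 1 (Finset.Icc 2 (n+1)) := by
        ext x; simp [Finset.mem_Icc]; omega
      rw [hsplit, Finset.sum_insert (by simp [Finset.mem_Icc])]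
      have hshift : ∑ x ∈ Finset.Icc 2 (n+1),
          (if bsp τ x = true ∧ bspP p τ (x - 1) = false then 1 else 0)
          = ∑ y ∈ Finset.Icc 1 n,
          (if bsp (Fin.tail τ) y = true ∧ bspP (τ 0) (Fin.tail τ) (y - 1) = false then 1 else 0) := by
        rw [show (2 : ℕ) = 1 + 1 from rfl, sum_Icc_shift]
        apply Finset.sum_congr rfl
        intro y hy
        simp only [Finset.mem_Icc] at hy
        rw [bsp_tail τ y hy.1 hy.2]
        have : bspP (τ 0) (Fin.tail τ) (y - 1) = bspP p τ (y + 1 - 1) := by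
          have h3 : y - 1 + 1 = y := by omega
          have := bspP_tail p τ (y-1) (by omega)
          rw [h3] at this
          simpa using this
        rw [this]
      rw [hshift, ← ih (τ 0) (Fin.tail τ)]
      congr 1

lemma bspP_false {n : ℕ} (τ : Fin n → Bool) (y : ℕ) : bspP false τ y = bsp τ y := by
  rcases Nat.eq_zero_or_pos y with rfl | hy
  · rw [bspP, if_pos rfl, bsp_zero]
  · rw [bspP, if_neg (by omega)]

lemma Hminus_eq {n : ℕ} (hn : 1 ≤ n) (I : ℝ) (τ : Fin n → Bool) :
    Hminus I n (configEquiv n τ) = I * (2 * (kf false τ : ℝ)) := by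
  set σ := configEquiv n τ with hσ
  set mb : ℕ → ℝ := fun x => if bsp τ (x-1) ≠ bsp τ x then 1 else 0 with hmb
  set ab : ℕ → ℝ := fun x => if bsp τ x = true ∧ bsp τ (x-1) = false then 1 else 0 with hab
  set db : ℕ → ℝ := fun x => if bsp τ (x-1) = true ∧ bsp τ x = false then 1 else 0 with hdb
  set v : ℕ → ℝ := fun x => if bsp τ x then 1 else 0 with hv
  have claim1 : ∀ x ∈ Finset.Icc 2 n,
      (if spin σ (x-1) ≠ spin σ x then (1:ℝ) else 0) = mb x := by
    intro x hx
    simp only [Finset.mem_Icc] at hx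
    rw [hσ, spin_eq τ (x-1) (by omega) (by omega), spin_eq τ x (by omega) (by omega), hmb]
    cases h1 : bsp τ (x-1) <;> cases h2 : bsp τ x <;> norm_num [h1, h2]
  have claim2 : (if spin σ 1 ≠ -1 then (1:ℝ) else 0) = mb 1 := by
    rw [hσ, spin_eq τ 1 le_rfl hn, hmb]
    simp only [bsp_zero]
    cases h1 : bsp τ 1 <;> norm_num [h1, bsp_zero]
  have claim3 : (if spin σ n ≠ -1 then (1:ℝ) else 0) = mb (n+1) := by
    rw [hσ, spin_eq τ n hn le_rfl, hmb]
    cases h1 : bsp τ n <;> norm_num [h1, bsp_gt τ (n+1) (by omega)]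
  have hsplit : Finset.Icc 1 (n+1) = insert 1 (insert (n+1) (Finset.Icc 2 n)) := by
    ext x; simp [Finset.mem_Icc]; omega
  have hH : Hminus I n σ = I * ∑ x ∈ Finset.Icc 1 (n+1), mb x := by
    rw [Hminus, Finset.sum_congr rfl claim1, claim2, claim3, hsplit]
    rw [Finset.sum_insert (by simp [Finset.mem_Icc]; omega),
      Finset.sum_insert (by simp [Finset.mem_Icc])]
    ring
  have hpt : ∀ x, mb x = ab x + db x := by
    intro x
    rw [hmb, hab, hdb]
    cases h1 : bsp τ (x-1) <;> cases h2 : bsp τ x <;> simp [h1, h2]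
  have hpt2 : ∀ x, ab x - db x = v x - v (x-1) := by
    intro x
    rw [hab, hdb, hv]
    cases h1 : bsp τ (x-1) <;> cases h2 : bsp τ x <;> simp [h1, h2]
  have tele : ∑ x ∈ Finset.Icc 1 (n+1), (ab x - db x) = 0 := by
    have : ∀ x, ab x - db x = v x - v (x-1) := hpt2
    calc ∑ x ∈ Finset.Icc 1 (n+1), (ab x - db x)
        = ∑ x ∈ Finset.Icc 1 (n+1), (v x - v (x-1)) := by
          exact Finset.sum_congr rfl (fun x _ => hpt2 x)
      _ = ∑ m ∈ Finset.range (n+1), (v (m+1) - v m) := by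
          rw [sum_Icc_one]
          simp
      _ = v (n+1) - v 0 := Finset.sum_range_sub v (n+1)
      _ = 0 := by rw [hv]; simp [bsp_gt τ (n+1) (by omega), bsp_zero]
  have hmb2 : ∑ x ∈ Finset.Icc 1 (n+1), mb x = 2 * ∑ x ∈ Finset.Icc 1 (n+1), ab x := by
    rw [Finset.sum_sub_distrib] at tele
    calc ∑ x ∈ Finset.Icc 1 (n+1), mb x
        = ∑ x ∈ Finset.Icc 1 (n+1), (ab x + db x) :=
          Finset.sum_congr rfl (fun x _ => hpt x)
      _ = ∑ x ∈ Finset.Icc 1 (n+1), ab x + ∑ x ∈ Finset.Icc 1 (n+1), db x :=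
          Finset.sum_add_distrib
      _ = 2 * ∑ x ∈ Finset.Icc 1 (n+1), ab x := by
          have : ∑ x ∈ Finset.Icc 1 (n+1), db x = ∑ x ∈ Finset.Icc 1 (n+1), ab x := by
            linarith
          rw [this]; ring
  have hk : ∑ x ∈ Finset.Icc 1 (n+1), ab x = (kf false τ : ℝ) := by
    rw [Finset.sum_Icc_succ_top (by omega), show ab (n+1) = 0 by
      rw [hab]; simp [bsp_gt τ (n+1) (by omega)]]
    rw [add_zero, kf_eq_sum n false τ]
    push_cast
    apply Finset.sum_congr rfl
    intro x _
    rw [hab, bspP_false]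
  rw [hH, hmb2, hk]

lemma Nplus_eq_s11 {n : ℕ} (τ : Fin n → Bool) : Nplus (configEquiv n τ) = onesF τ := by
  rw [Nplus, onesF, ← Finset.card_filter]
  apply Finset.card_bij' (fun (a : {x // x ∈ Finset.Icc 1 n}) _ => (siteEquiv n).symm a)
    (fun (i : Fin n) _ => siteEquiv n i)
  · intro a ha
    simp only [Finset.mem_filter, Finset.mem_univ, true_and] at ha ⊢
    exact ha
  · intro i hi
    simp only [Finset.mem_filter, Finset.mem_univ, true_and] at hi ⊢
    show configEquiv n τ (siteEquiv n i) = true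
    rw [configEquiv, Equiv.arrowCongr_apply]
    simpa using hi
  · intro a _
    simp
  · intro i _
    simp

lemma X_eq_S (β I : ℝ) (n : ℕ) (hn : 1 ≤ n) (r : ℤ) :
    X β I n r = S (Real.exp (-2*β*I)) n false r := by
  rw [X, S]
  apply Finset.sum_bij' (fun (σ : Config n) _ => (configEquiv n).symm σ)
    (fun (τ : Fin n → Bool) _ => configEquiv n τ)
  · intro σ hσ
    simp only [Finset.mem_filter, Finset.mem_univ, true_and] at hσ ⊢
    rw [← hσ]
    congr 1
    rw [← Nplus_eq_s11 ((configEquiv n).symm σ), Equiv.apply_symm_apply]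
  · intro τ hτ
    simp only [Finset.mem_filter, Finset.mem_univ, true_and] at hτ ⊢
    rw [← hτ, Nplus_eq_s11]
  · intro σ _
    simp
  · intro τ _
    simp
  · intro σ hσ
    have h1 : Hminus I n σ = I * (2 * (kf false ((configEquiv n).symm σ) : ℝ)) := by
      conv_lhs => rw [← Equiv.apply_symm_apply (configEquiv n) σ]
      exact Hminus_eq hn I _
    rw [h1]
    have h2 : -β * (I * (2 * (kf false ((configEquiv n).symm σ) : ℝ)))
        = (kf false ((configEquiv n).symm σ) : ℝ) * (-2 * β * I) := by ring
    rw [h2, Real.exp_nat_mul]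

/-- The closed form (22) for the crystal partition function of the Ising model:
`X^r_n = ∑_{k=1}^r C(n-r+1, k) C(r-1, k-1) χ^k` with `χ = e^{-2βI}`. -/
theorem stmt_11 (β I : ℝ) (hβ : 0 < β) (n : ℕ) (hn : 1 ≤ n)
    (r : ℕ) (hr0 : 1 ≤ r) (hr1 : r ≤ n) :
    X β I n (r : ℤ) = ∑ k ∈ Finset.Icc 1 r,
      ((n - r + 1).choose k : ℝ) * ((r - 1).choose (k - 1) : ℝ)
        * Real.exp (-2 * β * I) ^ k := by
  rw [X_eq_S β I n hn, (S_closed (Real.exp (-2*β*I)) n).2 r hr0 hr1, Ff]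
end
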